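/- Let K be a field, let S = ⋃_{k≥1} {10^k·n + k − 1 : n ≥ 1} ⊆ ℕ, and let A = K⟨x_1, x_2, x_3⟩/I, where I is the two-sided ideal generated by all monomials that do not occur as a factor of any right-infinite word x_{ε_1} x_{ε_2} x_{ε_3} ⋯ with ε_i ∈ {1,2,3} for all i and ε_i = 1 if and only if i ∈ S. Then A is a monomial algebra of exponential growth (there exist β > 1 and n_0 such that the K-dimension of the span of the nonzero monomials of A of length at most n is at least β^n for all n ≥ n_0), and A contains no noncommutative free subalgebra: for all a, b ∈ A, the unique K-algebra homomorphism from the free associative unital K-algebra on two generators X, Y with X ↦ a, Y ↦ b is not injective. -/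

import Mathlib

noncomputable section

namespace Paper

open Module Filter MulOpposite

/-- The free associative unital `K`-algebra on a set `σ` of generators,
realized as the monoid algebra of the free monoid on `σ`. -/
abbrev FreeAlg (K : Type) [Field K] (σ : Type) : Type := MonoidAlgebra K (FreeMonoid σ)

/-- The monomial of the free algebra corresponding to a word `w`. -/
def wrd (K : Type) [Field K] {σ : Type} (w : List σ) : FreeAlg K σ :=
  MonoidAlgebra.of K (FreeMonoid σ) (FreeMonoid.ofList w)

variable (K : Type) [Field K]

section Defs

variable {σ : Type} {A : Type} [Ring A] [Algebra K A]

/-- `a` is a monomial of `A` (i.e. the image of a word under the presentation `π`). -/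
def IsMono (π : FreeAlg K σ →ₐ[K] A) (a : A) : Prop :=
  ∃ w : List σ, a = π (wrd K w)

/-- `a` is a monomial of `A` of length `D`. -/
def IsMonoLen (π : FreeAlg K σ →ₐ[K] A) (D : ℕ) (a : A) : Prop :=
  ∃ w : List σ, w.length = D ∧ a = π (wrd K w)

/-- `π` presents `A` as a monomial algebra: `π` is onto and its kernel is spanned by the
monomials it contains (equivalently, it is generated as a two-sided ideal by monomials). -/
def MonomialPresentation (π : FreeAlg K σ →ₐ[K] A) : Prop :=
  Function.Surjective π ∧
    ∀ a : FreeAlg K σ, π a = 0 ↔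
      a ∈ Submodule.span K {m : FreeAlg K σ | ∃ w : List σ, m = wrd K w ∧ π (wrd K w) = 0}

/-- Every nonzero monomial of `A` is right prolongable. -/
def RightProlongable (π : FreeAlg K σ →ₐ[K] A) : Prop :=
  ∀ a : A, IsMono K π a → a ≠ 0 → ∃ w : List σ, w ≠ [] ∧ a * π (wrd K w) ≠ 0

/-- A subspace of `A` spanned by monomials. -/
def MonomialSubspace (π : FreeAlg K σ →ₐ[K] A) (L : Submodule K A) : Prop :=
  ∃ S : Set (List σ), L = Submodule.span K ((fun w => π (wrd K w)) '' S)

/-- The standard generating subspace, spanned by `1` together with the generators. -/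
def genV (π : FreeAlg K σ →ₐ[K] A) : Submodule K A :=
  Submodule.span K ({1} ∪ Set.range fun i : σ => π (wrd K [i]))

end Defs

section Amen

/-- `L` is a `(V, ε)`-invariant subspace of `A`, viewed as a right module over itself:
`dim (L·V) < (1+ε) · dim L`. -/
def RInv {A : Type} [Ring A] [Algebra K A] (L V : Submodule K A) (ε : ℝ) : Prop :=
  FiniteDimensional K L ∧ FiniteDimensional K (L * V : Submodule K A) ∧
    (finrank K (L * V : Submodule K A) : ℝ) < (1 + ε) * (finrank K L : ℝ)

/-- `L` is a `(V, ε)`-invariant subspace of `A`, viewed as a left module over itself. -/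
def LInv {A : Type} [Ring A] [Algebra K A] (L V : Submodule K A) (ε : ℝ) : Prop :=
  FiniteDimensional K L ∧ FiniteDimensional K (V * L : Submodule K A) ∧
    (finrank K (V * L : Submodule K A) : ℝ) < (1 + ε) * (finrank K L : ℝ)

/-- `A` is amenable as a right module over itself. -/
def RightSelfAmenable (A : Type) [Ring A] [Algebra K A] : Prop :=
  ∀ V : Submodule K A, FiniteDimensional K V → ∀ ε : ℝ, 0 < ε →
    ∃ L : Submodule K A, RInv K L V ε

/-- `A` is exhaustively amenable as a right module over itself. -/
def RightSelfExhAmenable (A : Type) [Ring A] [Algebra K A] : Prop :=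
  ∀ V : Submodule K A, FiniteDimensional K V → ∀ ε : ℝ, 0 < ε →
    ∀ W : Submodule K A, FiniteDimensional K W →
      ∃ L : Submodule K A, W ≤ L ∧ RInv K L V ε

/-- `A` is exhaustively amenable as a left module over itself. -/
def LeftSelfExhAmenable (A : Type) [Ring A] [Algebra K A] : Prop :=
  ∀ V : Submodule K A, FiniteDimensional K V → ∀ ε : ℝ, 0 < ε →
    ∀ W : Submodule K A, FiniteDimensional K W →
      ∃ L : Submodule K A, W ≤ L ∧ LInv K L V ε

/-- For a right `A`-module `M` (encoded via an `Aᵐᵒᵖ`-action), the subspace `L·V`,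
spanned by `{ℓ·v : ℓ ∈ L, v ∈ V}`. -/
def rLV {A M : Type} [Ring A] [Algebra K A] [AddCommGroup M] [Module K M] [Module Aᵐᵒᵖ M]
    (L : Submodule K M) (V : Submodule K A) : Submodule K M :=
  Submodule.span K {x : M | ∃ l ∈ L, ∃ v ∈ V, x = (op v) • l}

/-- `L` is a `(V, ε)`-invariant subspace of the right `A`-module `M`. -/
def RModInv {A M : Type} [Ring A] [Algebra K A] [AddCommGroup M] [Module K M] [Module Aᵐᵒᵖ M]
    (L : Submodule K M) (V : Submodule K A) (ε : ℝ) : Prop :=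
  FiniteDimensional K L ∧ FiniteDimensional K (rLV K L V) ∧
    (finrank K (rLV K L V) : ℝ) < (1 + ε) * (finrank K L : ℝ)

/-- The right `A`-module `M` is amenable. -/
def RModAmenable (A M : Type) [Ring A] [Algebra K A] [AddCommGroup M] [Module K M]
    [Module Aᵐᵒᵖ M] [IsScalarTower K Aᵐᵒᵖ M] : Prop :=
  ∀ V : Submodule K A, FiniteDimensional K V → ∀ ε : ℝ, 0 < ε →
    ∃ L : Submodule K M, RModInv K L V ε

/-- The right `A`-module `M` is exhaustively amenable. -/
def RModExhAmenable (A M : Type) [Ring A] [Algebra K A] [AddCommGroup M] [Module K M]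
    [Module Aᵐᵒᵖ M] [IsScalarTower K Aᵐᵒᵖ M] : Prop :=
  ∀ V : Submodule K A, FiniteDimensional K V → ∀ ε : ℝ, 0 < ε →
    ∀ W : Submodule K M, FiniteDimensional K W →
      ∃ L : Submodule K M, W ≤ L ∧ RModInv K L V ε

/-- For a left `A`-module `M`, the subspace `V·L`, spanned by `{v·ℓ : ℓ ∈ L, v ∈ V}`. -/
def lVL {A M : Type} [Ring A] [Algebra K A] [AddCommGroup M] [Module K M] [Module A M]
    (L : Submodule K M) (V : Submodule K A) : Submodule K M :=
  Submodule.span K {x : M | ∃ l ∈ L, ∃ v ∈ V, x = v • l}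

/-- `L` is a `(V, ε)`-invariant subspace of the left `A`-module `M`. -/
def LModInv {A M : Type} [Ring A] [Algebra K A] [AddCommGroup M] [Module K M] [Module A M]
    (L : Submodule K M) (V : Submodule K A) (ε : ℝ) : Prop :=
  FiniteDimensional K L ∧ FiniteDimensional K (lVL K L V) ∧
    (finrank K (lVL K L V) : ℝ) < (1 + ε) * (finrank K L : ℝ)

/-- The left `A`-module `M` is exhaustively amenable. -/
def LModExhAmenable (A M : Type) [Ring A] [Algebra K A] [AddCommGroup M] [Module K M]
    [Module A M] [IsScalarTower K A M] : Prop :=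
  ∀ V : Submodule K A, FiniteDimensional K V → ∀ ε : ℝ, 0 < ε →
    ∀ W : Submodule K M, FiniteDimensional K W →
      ∃ L : Submodule K M, W ≤ L ∧ LModInv K L V ε

/-- A Følner sequence for `A` as a right module over itself, with respect to the
generating subspace `V`. -/
def FolnerSeq {A : Type} [Ring A] [Algebra K A] (V : Submodule K A)
    (L : ℕ → Submodule K A) : Prop :=
  Monotone L ∧ (∀ n, FiniteDimensional K (L n)) ∧ (⨆ n, L n) = (⊤ : Submodule K A) ∧
    Tendsto (fun n => (finrank K (L n * V : Submodule K A) : ℝ) / (finrank K (L n) : ℝ))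
      atTop (nhds 1)

/-- The isoperimetric profile of `A` with respect to `V`:
`I(n) = inf {dim((W·V + W)/W) : dim W = n}`. -/
def isoProfile {A : Type} [Ring A] [Algebra K A] (V : Submodule K A) (n : ℕ) : ℕ :=
  sInf {k : ℕ | ∃ W : Submodule K A, FiniteDimensional K W ∧ finrank K W = n ∧
    FiniteDimensional K (W ⊔ W * V : Submodule K A) ∧
    k = finrank K (W ⊔ W * V : Submodule K A) - finrank K W}

end Amen

section Words

variable {σ : Type}

/-- The shift on bi-infinite words. -/
def shiftZ (s : ℤ → σ) : ℤ → σ := fun n => s (n + 1)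

/-- The word `u` occurs in the bi-infinite word `s` at position `k`. -/
def OccursAt (u : List σ) (s : ℤ → σ) (k : ℤ) : Prop :=
  ∀ i : Fin u.length, s (k + (i : ℕ)) = u.get i

/-- `u` is a (finite) factor of the bi-infinite word `s`. -/
def FactorZ (u : List σ) (s : ℤ → σ) : Prop := ∃ k : ℤ, OccursAt u s k

/-- `u` is a factor of the subshift `X`. -/
def FactorOfX (u : List σ) (X : Set (ℤ → σ)) : Prop := ∃ s ∈ X, FactorZ u s

/-- `s` is recurrent: every factor occurs at infinitely many positions. -/
def RecurrentZ (s : ℤ → σ) : Prop :=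
  ∀ u : List σ, FactorZ u s → {k : ℤ | OccursAt u s k}.Infinite

/-- `s` is uniformly recurrent: for every factor `u` there is `N` such that every
factor of `s` of length `N` contains an occurrence of `u`. -/
def UnifRecurrentZ (s : ℤ → σ) : Prop :=
  ∀ u : List σ, FactorZ u s → ∃ N : ℕ, ∀ v : List σ, FactorZ v s → v.length = N → u <:+: v

/-- `X ⊆ σ^ℤ` is a subshift: nonempty, closed and shift-invariant. -/
def IsSubshift [TopologicalSpace σ] (X : Set (ℤ → σ)) : Prop :=
  X.Nonempty ∧ IsClosed X ∧ ∀ s ∈ X, shiftZ s ∈ X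

/-- `X` is a minimal subshift. -/
def IsMinimalSubshift [TopologicalSpace σ] (X : Set (ℤ → σ)) : Prop :=
  IsSubshift X ∧
    ∀ Y : Set (ℤ → σ), Y ⊆ X → IsClosed Y → (∀ s ∈ Y, shiftZ s ∈ Y) → Y = ∅ ∨ Y = X

/-- `X` is a transitive subshift: some element has dense shift-orbit. -/
def IsTransitiveSubshift [TopologicalSpace σ] (X : Set (ℤ → σ)) : Prop :=
  IsSubshift X ∧ ∃ s ∈ X, closure {t : ℤ → σ | ∃ n : ℤ, t = fun m => s (m + n)} = X

/-- The word `u` occurs in the right-infinite word `s` at position `k`. -/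
def OccursAtN (u : List σ) (s : ℕ → σ) (k : ℕ) : Prop :=
  ∀ i : Fin u.length, s (k + (i : ℕ)) = u.get i

/-- `u` is a factor of the right-infinite word `s`. -/
def FactorN (u : List σ) (s : ℕ → σ) : Prop := ∃ k : ℕ, OccursAtN u s k

/-- A right-infinite word is uniformly recurrent. -/
def UnifRecurrentN (s : ℕ → σ) : Prop :=
  ∀ u : List σ, FactorN u s → ∃ N : ℕ, ∀ v : List σ, FactorN v s → v.length = N → u <:+: v

end Words

end Paper

namespace Paper

open Module

/-- The set `S = ⋃_{k ≥ 1} {10^k · n + k − 1 : n ≥ 1}`. -/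
def Sset : Set ℕ := {m : ℕ | ∃ k, 1 ≤ k ∧ ∃ n, 1 ≤ n ∧ m = 10 ^ k * n + k - 1}

/-- A word over the alphabet `{x_1, x_2, x_3}` (encoded as `{0, 1, 2} = Fin 3`) is *good*
if it occurs as a factor of some right-infinite word `x_{ε_1} x_{ε_2} x_{ε_3} ⋯` with
`ε_i = 1` (i.e. `ε i = 0` in our encoding) if and only if `i ∈ S`. -/
def goodWord (w : List (Fin 3)) : Prop :=
  ∃ ε : ℕ → Fin 3, (∀ i : ℕ, 1 ≤ i → (ε i = 0 ↔ i ∈ Sset)) ∧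
    ∃ t : ℕ, ∀ j : Fin w.length, w.get j = ε (t + (j : ℕ) + 1)


section Aux

attribute [local instance] Classical.propDecidable

open Module

/-! ### Combinatorics of `Sset` -/

lemma run_mem (j M i : ℕ) (hM : 1 ≤ M) (hij : i < j) : (10 ^ j * M + i) ∈ Sset := by
  refine ⟨i + 1, le_add_self, 10 ^ (j - (i + 1)) * M, ?_, ?_⟩
  · exact Nat.one_le_iff_ne_zero.2 (by positivity)
  · have h1 : 10 ^ (i + 1) * (10 ^ (j - (i + 1)) * M) = 10 ^ j * M := by
      rw [← mul_assoc, ← pow_add]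
      congr 2
      omega
    rw [h1]
    omega

lemma run_exists (t ℓ j : ℕ) (hℓ : 10 ^ j + j ≤ ℓ) :
    ∃ r, t + 1 ≤ r ∧ r + j ≤ t + ℓ + 1 ∧ ∀ i < j, (r + i) ∈ Sset := by
  have h2 : t % 10 ^ j < 10 ^ j := Nat.mod_lt _ (by positivity)
  have h0 := Nat.div_add_mod t (10 ^ j)
  have hmul : 10 ^ j * (t / 10 ^ j + 1) = 10 ^ j * (t / 10 ^ j) + 10 ^ j := by ring
  exact ⟨10 ^ j * (t / 10 ^ j + 1), by omega, by omega,
    fun i hi => run_mem j _ i (Nat.succ_le_succ (Nat.zero_le _)) hi⟩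

lemma full_factor (L : ℕ) :
    ∀ (ws : List (List (Fin 3))), (∀ w ∈ ws, w.length ≤ L ∧ ∃ x ∈ w, x ≠ 0) →
    ∀ q, q + 2 * L < ws.flatten.length →
    ∃ p, q ≤ p ∧ p ≤ q + 2 * L ∧ ∃ (h : p < ws.flatten.length), ws.flatten[p] ≠ 0 := by
  intro ws
  induction ws with
  | nil => intro _ q hq; simp at hq
  | cons w rest ih =>
    intro hall q hq
    have hw := hall w (by simp)
    have hrest : ∀ v ∈ rest, v.length ≤ L ∧ ∃ x ∈ v, x ≠ 0 :=
      fun v hv => hall v (by simp [hv])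
    simp only [List.flatten_cons] at hq ⊢
    rw [List.length_append] at hq
    by_cases hcase : w.length ≤ q
    · obtain ⟨p', h1, h2, h3, h4⟩ := ih hrest (q - w.length) (by omega)
      refine ⟨w.length + p', by omega, by omega, ?_, ?_⟩
      · rw [List.length_append]; omega
      · rw [List.getElem_append_right (by omega)]
        simpa [Nat.add_sub_cancel_left] using h4
    · push_neg at hcase
      obtain ⟨x, hx, hx0⟩ := hw.2
      obtain ⟨p0, hp0, hp0e⟩ := List.mem_iff_getElem.1 hx
      by_cases hc2 : q ≤ p0
      · refine ⟨p0, hc2, by omega, ?_, ?_⟩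
        · rw [List.length_append]; omega
        · rw [List.getElem_append_left hp0]; rw [hp0e]; exact hx0
      · push_neg at hc2
        match rest, hrest with
        | [], _ => simp at hq; omega
        | w1 :: rest', hrest =>
          have hw1 := hrest w1 (by simp)
          obtain ⟨x1, hx1, hx10⟩ := hw1.2
          obtain ⟨p1, hp1, hp1e⟩ := List.mem_iff_getElem.1 hx1
          have hlen : p1 < (w1 :: rest').flatten.length := by
            simp only [List.flatten_cons, List.length_append]; omega
          refine ⟨w.length + p1, by omega, by omega, ?_, ?_⟩
          · rw [List.length_append]; omega
          · rw [List.getElem_append_right (by omega)]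
            have he : (w1 :: rest').flatten[w.length + p1 - w.length] =
                (w1 :: rest').flatten[p1] := by congr 1; omega
            rw [he]
            simp only [List.flatten_cons]
            rw [List.getElem_append_left hp1, hp1e]
            exact hx10

lemma length_le_flatten (ws : List (List (Fin 3))) (h : ∀ w ∈ ws, w ≠ []) :
    ws.length ≤ ws.flatten.length := by
  induction ws with
  | nil => simp
  | cons w rest ih =>
    simp only [List.flatten_cons, List.length_append, List.length_cons]
    have h1 : w ≠ [] := h w (by simp)
    have h2 : 1 ≤ w.length := List.length_pos_iff.2 h1
    have := ih (fun v hv => h v (by simp [hv]))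
    omega

lemma long_concat_bad (L : ℕ) (ws : List (List (Fin 3)))
    (hall : ∀ w ∈ ws, w.length ≤ L ∧ ∃ x ∈ w, x ≠ 0)
    (hlen : 10 ^ (2 * L + 1) + (2 * L + 1) ≤ ws.length) : ¬ goodWord ws.flatten := by
  rintro ⟨ε, hε, t, hg⟩
  have hne : ∀ w ∈ ws, w ≠ [] := by
    intro w hw
    obtain ⟨x, hx, -⟩ := (hall w hw).2
    exact List.ne_nil_of_mem hx
  have hlenW : 10 ^ (2 * L + 1) + (2 * L + 1) ≤ ws.flatten.length :=
    le_trans hlen (length_le_flatten ws hne)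
  obtain ⟨r, hr1, hr2, hrS⟩ :=
    run_exists t ws.flatten.length (2 * L + 1) hlenW
  have hzero : ∀ p, r - (t + 1) ≤ p → p < r - (t + 1) + (2 * L + 1) →
      ∀ (h : p < ws.flatten.length), ws.flatten[p] = 0 := by
    intro p h1 h2 hlt
    have := hg ⟨p, hlt⟩
    simp only [List.get_eq_getElem] at this
    rw [this]
    have harg : t + p + 1 = r + (p - (r - (t + 1))) := by omega
    rw [harg]
    exact (hε _ (by omega)).2 (hrS _ (by omega))
  obtain ⟨p, hp1, hp2, hp3, hp4⟩ := full_factor L ws hall (r - (t + 1)) (by omega)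
  exact hp4 (hzero p hp1 (by omega) hp3)

/-! ### Monoid-algebra lemmas -/

lemma allzero_swap (u a b : FreeMonoid (Fin 3)) (hu : ∀ c ∈ u.toList, c = 0)
    (hab : a * b = u) : b * a = u := by
  have h1 : a.toList ++ b.toList = u.toList := by
    rw [← FreeMonoid.toList_mul, hab]
  apply FreeMonoid.toList.injective
  rw [FreeMonoid.toList_mul]
  have hz : ∀ c ∈ a.toList ++ b.toList, c = 0 := by rw [h1]; exact hu
  have hza : ∀ c ∈ a.toList, c = 0 := fun c hc => hz c (by simp [hc])
  have hzb : ∀ c ∈ b.toList, c = 0 := fun c hc => hz c (by simp [hc])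
  have e1 : b.toList ++ a.toList = List.replicate (b.toList.length + a.toList.length) 0 :=
    List.eq_replicate_iff.2 ⟨by simp, by
      intro c hc
      rcases List.mem_append.1 hc with h | h
      exacts [hzb c h, hza c h]⟩
  have e2 : u.toList = List.replicate (b.toList.length + a.toList.length) 0 :=
    List.eq_replicate_iff.2 ⟨by rw [← h1]; simp; omega, hu⟩
  rw [e1, e2]

lemma comm_apply_zero (K : Type) [Field K] (x y : MonoidAlgebra K (FreeMonoid (Fin 3))) (u : FreeMonoid (Fin 3))
    (hu : ∀ c ∈ u.toList, c = 0) : (x * y - y * x).coeff u = 0 := by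
  classical
  have key : ∀ a b : FreeMonoid (Fin 3), a * b = u ↔ b * a = u :=
    fun a b => ⟨allzero_swap u a b hu, allzero_swap u b a hu⟩
  rw [MonoidAlgebra.coeff_sub, Finsupp.sub_apply, MonoidAlgebra.coeff_mul, MonoidAlgebra.coeff_mul, Finsupp.sum_comm,
    sub_eq_zero]
  apply Finsupp.sum_congr
  intro a _
  apply Finsupp.sum_congr
  intro b _
  by_cases h : a * b = u
  · rw [if_pos h, if_pos ((key a b).1 h), mul_comm]
  · rw [if_neg h, if_neg (fun hc => h ((key b a).1 hc))]

lemma pow_support (K : Type) [Field K] (x : MonoidAlgebra K (FreeMonoid (Fin 3))) (m : ℕ) :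
    ∀ u ∈ (x ^ m).coeff.support, ∃ ws : List (FreeMonoid (Fin 3)),
      ws.length = m ∧ (∀ w ∈ ws, w ∈ x.coeff.support) ∧ u = ws.prod := by
  classical
  induction m with
  | zero =>
    intro u hu
    rw [pow_zero] at hu
    have : u = 1 := by
      have := MonoidAlgebra.support_coeff_one_subset hu
      simpa using this
    exact ⟨[], rfl, by simp, by simp [this]⟩
  | succ m ih =>
    intro u hu
    rw [pow_succ] at hu
    have := MonoidAlgebra.support_coeff_mul_subset (x ^ m) x hu
    rw [Finset.mem_mul] at this
    obtain ⟨v, hv, w, hw, rfl⟩ := this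
    obtain ⟨ws, hl, hmem, rfl⟩ := ih v hv
    refine ⟨ws ++ [w], by simp [hl], ?_, by simp⟩
    intro w' hw'
    rcases List.mem_append.1 hw' with h | h
    · exact hmem w' h
    · simp at h; subst h; exact hw

lemma toList_prod (ws : List (FreeMonoid (Fin 3))) :
    (ws.prod).toList = (ws.map FreeMonoid.toList).flatten := by
  induction ws with
  | nil => simp
  | cons w rest ih => simp [FreeMonoid.toList_mul, ih]

lemma span_bad_eq (K : Type) [Field K] (a : FreeAlg K (Fin 3)) :
    a ∈ Submodule.span K {m : FreeAlg K (Fin 3) | ∃ w : List (Fin 3), m = wrd K w ∧ ¬ goodWord w}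
      ↔ a.coeff ∈ Finsupp.supported K K {u : FreeMonoid (Fin 3) | ¬ goodWord u.toList} := by
  have e : Submodule.span K
      {m : FreeAlg K (Fin 3) | ∃ w : List (Fin 3), m = wrd K w ∧ ¬ goodWord w}
      = (Finsupp.supported K K {u : FreeMonoid (Fin 3) | ¬ goodWord u.toList}).map
        ((MonoidAlgebra.coeffLinearEquiv K).symm.toLinearMap) := by
    rw [Finsupp.supported_eq_span_single, Submodule.map_span]
    congr 1
    ext m
    simp only [Set.mem_image, Set.mem_setOf_eq]
    constructor
    · rintro ⟨w, rfl, hb⟩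
      exact ⟨Finsupp.single (FreeMonoid.ofList w) 1, ⟨FreeMonoid.ofList w, by simpa using hb, rfl⟩,
        rfl⟩
    · rintro ⟨_, ⟨u, hb, rfl⟩, rfl⟩
      exact ⟨u.toList, rfl, hb⟩
  rw [e, Submodule.mem_map_equiv]
  rfl

/-! ### Nilpotency of commutators -/

lemma comm_nilpotent (K : Type) [Field K] {A : Type} [Ring A] [Algebra K A]
    (π : FreeAlg K (Fin 3) →ₐ[K] A)
    (hsurj : Function.Surjective π)
    (hker : ∀ a : FreeAlg K (Fin 3), π a = 0 ↔
      a ∈ Submodule.span K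
        {m : FreeAlg K (Fin 3) | ∃ w : List (Fin 3), m = wrd K w ∧ ¬ goodWord w})
    (a b : A) : ∃ m, 1 ≤ m ∧ (a * b - b * a) ^ m = 0 := by
  classical
  obtain ⟨x, rfl⟩ := hsurj a
  obtain ⟨y, rfl⟩ := hsurj b
  set c := x * y - y * x with hc
  set L := c.coeff.support.sup (fun u => u.toList.length) with hL
  set m := 10 ^ (2 * L + 1) + (2 * L + 1) with hm
  have hsupp : ∀ w ∈ c.coeff.support, w.toList.length ≤ L ∧ ∃ ch ∈ w.toList, ch ≠ 0 := by
    intro w hw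
    constructor
    · exact Finset.le_sup (f := fun u : FreeMonoid (Fin 3) => u.toList.length) hw
    · by_contra hcon
      push_neg at hcon
      have : c.coeff w = 0 := comm_apply_zero K x y w hcon
      exact Finsupp.mem_support_iff.1 hw this
  have hπ : π (c ^ m) = 0 := by
    apply (hker _).2
    rw [span_bad_eq]
    rw [Finsupp.mem_supported]
    intro u hu
    obtain ⟨ws, hlen, hmem, rfl⟩ := pow_support K c m (u := u) (by simpa using hu)
    simp only [Set.mem_setOf_eq]
    rw [toList_prod]
    apply long_concat_bad L
    · intro w' hw'
      obtain ⟨w, hw, rfl⟩ := List.mem_map.1 hw'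
      exact hsupp w (hmem w hw)
    · simp [hlen, hm]
  refine ⟨m, by have h10 : 0 < 10 ^ (2 * L + 1) := pow_pos (by norm_num) _; omega, ?_⟩
  have : π x * π y - π y * π x = π c := by simp [hc]
  rw [this, ← map_pow, hπ]

open Matrix in
lemma matrix_comm_pow_ne (K : Type) [Field K] (m : ℕ) :
    ((FreeAlgebra.lift K (![single 0 1 (1:K), single 1 0 (1:K)] :
        Fin 2 → Matrix (Fin 2) (Fin 2) K)) :
      FreeAlgebra K (Fin 2) →ₐ[K] Matrix (Fin 2) (Fin 2) K)
      ((FreeAlgebra.ι K (0 : Fin 2) * FreeAlgebra.ι K (1 : Fin 2) -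
        FreeAlgebra.ι K (1 : Fin 2) * FreeAlgebra.ι K (0 : Fin 2)) ^ m) ≠ 0 := by
  set u := single (0 : Fin 2) (1 : Fin 2) (1:K)
  set v := single (1 : Fin 2) (0 : Fin 2) (1:K)
  have himg : ((FreeAlgebra.lift K (![u, v] : Fin 2 → Matrix (Fin 2) (Fin 2) K)))
      ((FreeAlgebra.ι K (0 : Fin 2) * FreeAlgebra.ι K (1 : Fin 2) -
        FreeAlgebra.ι K (1 : Fin 2) * FreeAlgebra.ι K (0 : Fin 2)) ^ m)
      = (u * v - v * u) ^ m := by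
    rw [map_pow, map_sub, _root_.map_mul, _root_.map_mul]
    simp [FreeAlgebra.lift_ι_apply]
  rw [himg]
  have hsq : (u * v - v * u) * (u * v - v * u) = 1 := by
    have h1 : u * v = single (0 : Fin 2) 0 (1:K) := by
      rw [Matrix.single_mul_single_same]; norm_num
    have h2 : v * u = single (1 : Fin 2) 1 (1:K) := by
      rw [Matrix.single_mul_single_same]; norm_num
    rw [h1, h2]
    ext i j
    fin_cases i <;> fin_cases j <;>
      simp [Matrix.sub_apply, Matrix.mul_apply, Matrix.single, Matrix.one_apply,
        Fin.sum_univ_two]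
  have hunit : IsUnit (u * v - v * u) := by
    rw [isUnit_iff_exists]
    exact ⟨u * v - v * u, hsq, hsq⟩
  exact (hunit.pow m).ne_zero

/-! ### The independent family of monomials -/

def Pbad (n : ℕ) (j : Fin n) : Prop := ((j : ℕ) + 1) ∈ Sset

def lett (n : ℕ) (g : {j : Fin n // ¬ Pbad n j} → Bool) (j : Fin n) : Fin 3 :=
  if h : Pbad n j then 0 else (if g ⟨j, h⟩ then 1 else 2)

def wg (n : ℕ) (g : {j : Fin n // ¬ Pbad n j} → Bool) : List (Fin 3) :=
  List.ofFn (lett n g)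

def epsg (n : ℕ) (g : {j : Fin n // ¬ Pbad n j} → Bool) : ℕ → Fin 3 := fun i =>
  if i ∈ Sset then 0 else (if h : i - 1 < n then lett n g ⟨i - 1, h⟩ else 1)

lemma wg_length (n g) : (wg n g).length = n := by simp [wg]

lemma lett_ne_zero (n : ℕ) (g) (j : Fin n) (h : ¬ Pbad n j) : lett n g j ≠ 0 := by
  rw [lett, dif_neg h]
  split <;> decide

lemma wg_good (n : ℕ) (g) : goodWord (wg n g) := by
  refine ⟨epsg n g, ?_, 0, ?_⟩
  · intro i hi
    constructor
    · intro h0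
      by_contra hS
      rw [epsg, if_neg hS] at h0
      split at h0
      · next h =>
        have hP : ¬ Pbad n ⟨i - 1, h⟩ := by
          simp only [Pbad]
          have : i - 1 + 1 = i := by omega
          rw [this]
          exact hS
        exact lett_ne_zero n g _ hP h0
      · exact absurd h0 (by decide)
    · intro hS
      rw [epsg, if_pos hS]
  · intro j
    have hj : (j : ℕ) < n := by simpa [wg_length] using j.2
    have hget : (wg n g).get j = lett n g ⟨(j : ℕ), hj⟩ := by
      rw [List.get_eq_getElem]; simp [wg]
    rw [hget]
    have harg : 0 + (j : ℕ) + 1 = (j : ℕ) + 1 := by omega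
    rw [harg, epsg]
    by_cases hS : ((j : ℕ) + 1) ∈ Sset
    · have hP : Pbad n ⟨(j : ℕ), hj⟩ := hS
      rw [if_pos hS, lett, dif_pos hP]
    · rw [if_neg hS]
      have h1 : (j : ℕ) + 1 - 1 < n := by omega
      rw [dif_pos h1]
      congr 1

lemma wg_inj (n : ℕ) : Function.Injective (wg n) := by
  intro g g' h
  funext j
  have h2 : lett n g = lett n g' := List.ofFn_inj.1 h
  have h3 := congrFun h2 j.1
  rw [lett, lett, dif_neg j.2, dif_neg j.2] at h3
  have : (⟨j.1, j.2⟩ : {j : Fin n // ¬ Pbad n j}) = j := rfl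
  rw [this] at h3
  by_contra hne
  rcases Bool.eq_false_or_eq_true (g j) with h4 | h4 <;>
    rcases Bool.eq_false_or_eq_true (g' j) with h5 | h5 <;>
      simp [h4, h5] at h3 hne

lemma card_bad_le (n : ℕ) :
    (Fintype.card {j : Fin n // Pbad n j} : ℝ) ≤ (n : ℝ) / 5 := by
  have h1 : Fintype.card {j : Fin n // Pbad n j}
      = (Finset.univ.filter (fun j : Fin n => Pbad n j)).card := Fintype.card_subtype _
  set T := (Finset.Icc 1 n).filter (· ∈ Sset) with hT
  have h2 : (Finset.univ.filter (fun j : Fin n => Pbad n j)).card ≤ T.card := by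
    refine Finset.card_le_card_of_injOn (fun j => (j : ℕ) + 1) ?_ ?_
    · intro j hj
      simp only [Finset.mem_coe, Finset.mem_filter, Finset.mem_univ, true_and] at hj
      simp only [Finset.mem_coe, hT, Finset.mem_filter, Finset.mem_Icc]
      exact ⟨⟨by omega, by have := j.2; omega⟩, hj⟩
    · intro j _ j' _ hjj
      have h' : (j : ℕ) + 1 = (j' : ℕ) + 1 := hjj
      exact Fin.ext (by omega)
  have h3 : T ⊆ (Finset.Icc 1 n).biUnion
      (fun k => (Finset.Icc 1 (n / 10 ^ k)).image (fun q => 10 ^ k * q + k - 1)) := by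
    intro i hi
    simp only [hT, Finset.mem_filter, Finset.mem_Icc] at hi
    obtain ⟨⟨hi1, hi2⟩, k, hk, q, hq, rfl⟩ := hi
    have hpow : k < 10 ^ k := Nat.lt_pow_self (by norm_num)
    have hq10 : 10 ^ k ≤ 10 ^ k * q := Nat.le_mul_of_pos_right _ hq
    have hcomm : q * 10 ^ k = 10 ^ k * q := mul_comm _ _
    rw [Finset.mem_biUnion]
    refine ⟨k, ?_, ?_⟩
    · rw [Finset.mem_Icc]
      exact ⟨hk, by omega⟩
    · rw [Finset.mem_image]
      refine ⟨q, ?_, rfl⟩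
      rw [Finset.mem_Icc]
      refine ⟨hq, ?_⟩
      rw [Nat.le_div_iff_mul_le (by positivity)]
      omega
  have h4 : T.card ≤ ∑ k ∈ Finset.Icc 1 n, n / 10 ^ k := by
    calc T.card ≤ _ := Finset.card_le_card h3
    _ ≤ ∑ k ∈ Finset.Icc 1 n, ((Finset.Icc 1 (n / 10 ^ k)).image
        (fun q => 10 ^ k * q + k - 1)).card := Finset.card_biUnion_le
    _ ≤ ∑ k ∈ Finset.Icc 1 n, n / 10 ^ k := by
        apply Finset.sum_le_sum
        intro k _
        calc ((Finset.Icc 1 (n / 10 ^ k)).image _).card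
            ≤ (Finset.Icc 1 (n / 10 ^ k)).card := Finset.card_image_le
          _ = n / 10 ^ k := by rw [Nat.card_Icc]; simp
  have h5 : ((∑ k ∈ Finset.Icc 1 n, n / 10 ^ k : ℕ) : ℝ) ≤ (n : ℝ) / 5 := by
    push_cast
    calc (∑ k ∈ Finset.Icc 1 n, ((n / 10 ^ k : ℕ) : ℝ))
        ≤ ∑ k ∈ Finset.Icc 1 n, (n : ℝ) * (1 / 10) * (1 / 2) ^ (k - 1) := by
          apply Finset.sum_le_sum
          intro k hk
          rw [Finset.mem_Icc] at hk
          calc ((n / 10 ^ k : ℕ) : ℝ) ≤ (n : ℝ) / (10 ^ k : ℕ) := Nat.cast_div_le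
            _ = (n : ℝ) * (1 / 10) ^ k := by push_cast; rw [div_eq_mul_inv, ← inv_pow]; norm_num
            _ ≤ (n : ℝ) * ((1 / 2) ^ (k - 1) * (1 / 10)) := by
                apply mul_le_mul_of_nonneg_left _ (by positivity)
                have hk' : k - 1 + 1 = k := by omega
                calc ((1:ℝ) / 10) ^ k = (1 / 10) ^ (k - 1) * (1 / 10) := by
                      rw [← pow_succ, hk']
                  _ ≤ (1 / 2) ^ (k - 1) * (1 / 10) := by
                      apply mul_le_mul_of_nonneg_right _ (by norm_num)
                      exact pow_le_pow_left₀ (by norm_num) (by norm_num) _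
            _ = (n : ℝ) * (1 / 10) * (1 / 2) ^ (k - 1) := by ring
      _ = (n : ℝ) * (1 / 10) * ∑ k ∈ Finset.Icc 1 n, ((1 : ℝ) / 2) ^ (k - 1) := by
          rw [Finset.mul_sum]
      _ ≤ (n : ℝ) * (1 / 10) * 2 := by
          apply mul_le_mul_of_nonneg_left _ (by positivity)
          calc ∑ k ∈ Finset.Icc 1 n, ((1 : ℝ) / 2) ^ (k - 1)
              = ∑ j ∈ Finset.range n, ((1 : ℝ) / 2) ^ j := by
                rw [← Finset.Ico_add_one_right_eq_Icc, Finset.sum_Ico_eq_sum_range]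
                simp
            _ ≤ 2 := sum_geometric_two_le n
      _ = (n : ℝ) / 5 := by ring
  calc (Fintype.card {j : Fin n // Pbad n j} : ℝ)
      ≤ ((∑ k ∈ Finset.Icc 1 n, n / 10 ^ k : ℕ) : ℝ) := by
        rw [h1]
        exact_mod_cast le_trans h2 h4
    _ ≤ (n : ℝ) / 5 := h5

lemma indep_family (K : Type) [Field K] {A : Type} [Ring A] [Algebra K A]
    (π : FreeAlg K (Fin 3) →ₐ[K] A) (n : ℕ)
    (hker : ∀ a : FreeAlg K (Fin 3), π a = 0 ↔
      a ∈ Submodule.span K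
        {m : FreeAlg K (Fin 3) | ∃ w : List (Fin 3), m = wrd K w ∧ ¬ goodWord w}) :
    LinearIndependent K
      (fun g : ({j : Fin n // ¬ Pbad n j} → Bool) => π (wrd K (wg n g))) := by
  rw [Fintype.linearIndependent_iff]
  intro cf hsum g₀
  set x : FreeAlg K (Fin 3) :=
    ∑ g : ({j : Fin n // ¬ Pbad n j} → Bool), cf g • wrd K (wg n g) with hx
  have hπx : π x = 0 := by
    rw [hx, map_sum]
    simpa [map_smul] using hsum
  have hmem := (hker x).1 hπx
  rw [span_bad_eq, Finsupp.mem_supported] at hmem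
  set u₀ := FreeMonoid.ofList (wg n g₀) with hu₀
  have heval : x.coeff u₀ = cf g₀ := by
    rw [hx]
    rw [MonoidAlgebra.coeff_sum, Finset.sum_apply']
    rw [Finset.sum_eq_single g₀]
    · rw [MonoidAlgebra.coeff_smul_apply]
      rw [show (wrd K (wg n g₀)).coeff = Finsupp.single u₀ (1 : K) from rfl]
      rw [Finsupp.single_apply, if_pos rfl]
      simp
    · intro g _ hg
      rw [MonoidAlgebra.coeff_smul_apply]
      rw [show (wrd K (wg n g)).coeff = Finsupp.single (FreeMonoid.ofList (wg n g)) (1 : K) from rfl]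
      rw [Finsupp.single_apply, if_neg, smul_zero]
      intro hcon
      apply hg
      apply wg_inj n
      have := congrArg FreeMonoid.toList hcon
      simpa [hu₀] using this
    · intro hcon
      exact absurd (Finset.mem_univ g₀) hcon
  by_contra hne
  have hu₀supp : u₀ ∈ x.coeff.support := Finsupp.mem_support_iff.2 (by rw [heval]; exact hne)
  have := hmem hu₀supp
  simp only [Set.mem_setOf_eq, hu₀, FreeMonoid.toList_ofList] at this
  exact this (wg_good n g₀)

lemma growth_bound (K : Type) [Field K] {A : Type} [Ring A] [Algebra K A]
    (π : FreeAlg K (Fin 3) →ₐ[K] A) (n : ℕ)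
    (hker : ∀ a : FreeAlg K (Fin 3), π a = 0 ↔
      a ∈ Submodule.span K
        {m : FreeAlg K (Fin 3) | ∃ w : List (Fin 3), m = wrd K w ∧ ¬ goodWord w}) :
    (Real.sqrt 2) ^ n ≤ (finrank K (Submodule.span K
      {a : A | ∃ w : List (Fin 3), w.length ≤ n ∧ a = π (wrd K w)}) : ℝ) := by
  classical
  set Bigset := {a : A | ∃ w : List (Fin 3), w.length ≤ n ∧ a = π (wrd K w)} with hBigset
  have hBig : Bigset = (fun w : List (Fin 3) => π (wrd K w)) '' {w | w.length ≤ n} := by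
    ext a
    constructor
    · rintro ⟨w, h1, h2⟩; exact ⟨w, h1, h2.symm⟩
    · rintro ⟨w, h1, h2⟩; exact ⟨w, h1, h2.symm⟩
  have hFD : FiniteDimensional K (Submodule.span K Bigset) := by
    rw [hBig]
    exact FiniteDimensional.span_of_finite K ((List.finite_length_le (Fin 3) n).image _)
  have hindep := indep_family K π n hker
  have hrange : Set.range (fun g : ({j : Fin n // ¬ Pbad n j} → Bool) => π (wrd K (wg n g)))
      ⊆ Bigset := by
    rintro a ⟨g, rfl⟩
    exact ⟨wg n g, le_of_eq (wg_length n g), rfl⟩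
  have hspanle : Submodule.span K (Set.range
        (fun g : ({j : Fin n // ¬ Pbad n j} → Bool) => π (wrd K (wg n g))))
      ≤ Submodule.span K Bigset := Submodule.span_mono hrange
  have hcard := finrank_span_eq_card hindep
  have hfr : 2 ^ (Fintype.card {j : Fin n // ¬ Pbad n j}) ≤
      finrank K (Submodule.span K Bigset) := by
    calc 2 ^ (Fintype.card {j : Fin n // ¬ Pbad n j})
        = Fintype.card ({j : Fin n // ¬ Pbad n j} → Bool) := by
          rw [Fintype.card_fun]
          simp
      _ = finrank K (Submodule.span K (Set.range
            (fun g : ({j : Fin n // ¬ Pbad n j} → Bool) => π (wrd K (wg n g))))) :=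
          hcard.symm
      _ ≤ finrank K (Submodule.span K Bigset) := Submodule.finrank_mono hspanle
  have hcompl : Fintype.card {j : Fin n // ¬ Pbad n j}
      = n - Fintype.card {j : Fin n // Pbad n j} := by
    rw [Fintype.card_subtype_compl]
    simp
  have hs5 : (Fintype.card {j : Fin n // Pbad n j} : ℝ) ≤ (n : ℝ) / 5 := card_bad_le n
  have hsn : Fintype.card {j : Fin n // Pbad n j} ≤ n := by
    calc Fintype.card {j : Fin n // Pbad n j} ≤ Fintype.card (Fin n) :=
        Fintype.card_subtype_le _
      _ = n := Fintype.card_fin n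
  set s := Fintype.card {j : Fin n // Pbad n j} with hsdef
  have h2s : n ≤ 2 * (n - s) := by
    have : 2 * (s : ℝ) ≤ n := by linarith
    have h2s' : 2 * s ≤ n := by exact_mod_cast this
    omega
  have hsqrt2 : (1 : ℝ) ≤ Real.sqrt 2 := by
    rw [show (1:ℝ) = Real.sqrt 1 by simp]
    exact Real.sqrt_le_sqrt (by norm_num)
  calc (Real.sqrt 2) ^ n ≤ (Real.sqrt 2) ^ (2 * (n - s)) := pow_le_pow_right₀ hsqrt2 h2s
    _ = ((Real.sqrt 2) ^ 2) ^ (n - s) := by rw [pow_mul]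
    _ = 2 ^ (n - s) := by rw [Real.sq_sqrt (by norm_num)]
    _ = ((2 ^ (n - s) : ℕ) : ℝ) := by push_cast; ring
    _ ≤ (finrank K (Submodule.span K Bigset) : ℝ) := by
        rw [hcompl] at hfr
        exact_mod_cast hfr

end Aux

/-- a monomial algebra of exponential growth without free subalgebras.
Let `A = K⟨x_1, x_2, x_3⟩ / I` where `I` is the ideal generated (equivalently, spanned) by
the monomials that are not factors of any of the admissible infinite words above. Then `A`
has exponential growth, while for any `a, b ∈ A` the `K`-algebra homomorphism from the
free algebra on two generators sending them to `a`, `b` is not injective. -/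
theorem stmt14 (K : Type) [Field K]
    (A : Type) [Ring A] [Algebra K A] (π : FreeAlg K (Fin 3) →ₐ[K] A)
    (hsurj : Function.Surjective π)
    (hker : ∀ a : FreeAlg K (Fin 3), π a = 0 ↔
      a ∈ Submodule.span K
        {m : FreeAlg K (Fin 3) | ∃ w : List (Fin 3), m = wrd K w ∧ ¬ goodWord w}) :
    -- exponential growth
    (∃ β : ℝ, 1 < β ∧ ∃ n₀ : ℕ, ∀ n : ℕ, n₀ ≤ n →
      β ^ n ≤ (finrank K (Submodule.span K
        {a : A | ∃ w : List (Fin 3), w.length ≤ n ∧ a = π (wrd K w)}) : ℝ)) ∧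
    -- no noncommutative free subalgebras
    (∀ a b : A, ¬ Function.Injective
      (FreeAlgebra.lift K (![a, b] : Fin 2 → A) : FreeAlgebra K (Fin 2) →ₐ[K] A)) := by
  constructor
  · refine ⟨Real.sqrt 2, ?_, 0, fun n _ => growth_bound K π n hker⟩
    have : Real.sqrt 1 < Real.sqrt 2 := Real.sqrt_lt_sqrt (by norm_num) (by norm_num)
    simpa using this
  · intro a b hinj
    obtain ⟨m, hm1, hm2⟩ := comm_nilpotent K π hsurj hker a b
    have h0 : (FreeAlgebra.lift K (![a, b] : Fin 2 → A))
        ((FreeAlgebra.ι K (0 : Fin 2) * FreeAlgebra.ι K (1 : Fin 2) -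
          FreeAlgebra.ι K (1 : Fin 2) * FreeAlgebra.ι K (0 : Fin 2)) ^ m) = 0 := by
      rw [map_pow, map_sub, _root_.map_mul, _root_.map_mul]
      simp only [FreeAlgebra.lift_ι_apply, Matrix.cons_val_zero, Matrix.cons_val_one,
        Matrix.head_cons]
      exact hm2
    have hzero : (FreeAlgebra.ι K (0 : Fin 2) * FreeAlgebra.ι K (1 : Fin 2) -
        FreeAlgebra.ι K (1 : Fin 2) * FreeAlgebra.ι K (0 : Fin 2)) ^ m = 0 := by
      apply hinj
      rw [h0, map_zero]
    have := matrix_comm_pow_ne K m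
    rw [hzero, map_zero] at this
    exact this rfl

end Paper
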